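/- arXiv:2601.17294 — 2 statements merged into one kernel-verified Lean document; each statement's English description precedes it below -/
import Mathlib

section
/- Let d be a positive integer, let a, b be integers with 1 ≤ a ≤ b and a + b ≤ d, and let a', b' be integers with 1 ≤ a' ≤ b' and a' + b' ≤ d. If (a,b) ≠ (a',b'), then O^{(d)}_{a,b} ∩ O^{(d)}_{a',b'} = ∅. -/
open scoped BigOperators

noncomputable def uvec {d : ℕ} (A : Finset (Fin d)) (ε : Fin d → ℝ) :
    EuclideanSpace ℝ (Fin d) :=
  (Real.sqrt A.card)⁻¹ • ∑ i ∈ A, ε i • (EuclideanSpace.single i (1 : ℝ))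

def IsSign {d : ℕ} (A : Finset (Fin d)) (ε : Fin d → ℝ) : Prop :=
  ∀ i, if i ∈ A then (ε i = 1 ∨ ε i = -1) else ε i = 1

def IsIndex (d a b : ℕ) (A B : Finset (Fin d)) (ε δ : Fin d → ℝ) : Prop :=
  Disjoint A B ∧ A.card = a ∧ B.card = b ∧ IsSign A ε ∧ IsSign B δ

noncomputable def Wspan {d : ℕ} (A B : Finset (Fin d)) (ε δ : Fin d → ℝ) :
    Submodule ℝ (EuclideanSpace ℝ (Fin d)) :=
  Submodule.span ℝ {uvec A ε, uvec B δ}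

def orbitSet (d a b : ℕ) : Set (Submodule ℝ (EuclideanSpace ℝ (Fin d))) :=
  {W | ∃ A B ε δ, IsIndex d a b A B ε δ ∧ W = Wspan A B ε δ}

lemma uvec_apply {d : ℕ} (A : Finset (Fin d)) (ε : Fin d → ℝ) (i : Fin d) :
    uvec A ε i = (Real.sqrt A.card)⁻¹ * (if i ∈ A then ε i else 0) := by
  have : (∑ x ∈ A, ε x • EuclideanSpace.single x (1:ℝ)) i
      = ∑ x ∈ A, (ε x • EuclideanSpace.single x (1:ℝ)) i := by
    rw [WithLp.ofLp_sum]; exact Finset.sum_apply i A _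
  simp [uvec, this, EuclideanSpace.single_apply, mul_ite]

lemma uvec_ne_zero_iff {d : ℕ} {A : Finset (Fin d)} {ε : Fin d → ℝ}
    (hA : 1 ≤ A.card) (hε : IsSign A ε) (i : Fin d) :
    uvec A ε i ≠ 0 ↔ i ∈ A := by
  have hs : (Real.sqrt A.card)⁻¹ ≠ 0 := by
    have : (0:ℝ) < A.card := by exact_mod_cast hA
    positivity
  rw [uvec_apply]
  by_cases h : i ∈ A
  · have := hε i
    rw [if_pos h] at this
    rcases this with h1 | h1 <;> simp [h, h1, hs]
  · simp [h]

lemma support_cases {d : ℕ} {A B C : Finset (Fin d)} {ε δ η : Fin d → ℝ} {s t : ℝ}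
    (hAB : Disjoint A B) (hA : 1 ≤ A.card) (hB : 1 ≤ B.card) (hC : 1 ≤ C.card)
    (hε : IsSign A ε) (hδ : IsSign B δ) (hη : IsSign C η)
    (heq : s • uvec A ε + t • uvec B δ = uvec C η) :
    C = A ∨ C = B ∨ C = A ∪ B := by
  have key : ∀ i, i ∈ C ↔ ((i ∈ A ∧ s ≠ 0) ∨ (i ∈ B ∧ t ≠ 0)) := by
    intro i
    have happ : uvec C η i = s * uvec A ε i + t * uvec B δ i := by
      rw [← heq]; rfl
    rw [← uvec_ne_zero_iff hC hη i, happ]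
    have huA := uvec_ne_zero_iff hA hε i
    have huB := uvec_ne_zero_iff hB hδ i
    by_cases hiA : i ∈ A
    · have hiB : i ∉ B := Finset.disjoint_left.mp hAB hiA
      have hvB : uvec B δ i = 0 := by
        by_contra h; exact hiB (huB.mp h)
      have hvA : uvec A ε i ≠ 0 := huA.mpr hiA
      simp [hvB, hiA, hiB, hvA]
    · by_cases hiB : i ∈ B
      · have hvA : uvec A ε i = 0 := by
          by_contra h; exact hiA (huA.mp h)
        have hvB : uvec B δ i ≠ 0 := huB.mpr hiB
        simp [hvA, hiA, hiB, hvB]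
      · have hvA : uvec A ε i = 0 := by
          by_contra h; exact hiA (huA.mp h)
        have hvB : uvec B δ i = 0 := by
          by_contra h; exact hiB (huB.mp h)
        simp [hvA, hvB, hiA, hiB]
  by_cases hs : s = 0
  · by_cases ht : t = 0
    · exfalso
      have : C = ∅ := by
        ext i; simp [key i, hs, ht]
      rw [this] at hC; simp at hC
    · right; left
      ext i; simp [key i, hs, ht]
  · by_cases ht : t = 0
    · left; ext i; simp [key i, hs, ht]
    · right; right; ext i; simp [key i, hs, ht, Finset.mem_union]

/-- orbits with distinct parameter pairs are disjoint:
if `(a,b) ≠ (a',b')` (with `1 ≤ a ≤ b`, `a+b ≤ d`, `1 ≤ a' ≤ b'`, `a'+b' ≤ d`),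
then `O^{(d)}_{a,b} ∩ O^{(d)}_{a',b'} = ∅`. -/
theorem stmt8 (d a b a' b' : ℕ) (hd : 0 < d)
    (ha : 1 ≤ a) (hab : a ≤ b) (habd : a + b ≤ d)
    (ha' : 1 ≤ a') (hab' : a' ≤ b') (habd' : a' + b' ≤ d)
    (hne : (a, b) ≠ (a', b')) :
    orbitSet d a b ∩ orbitSet d a' b' = ∅ := by
  ext W
  simp only [Set.mem_inter_iff, Set.mem_empty_iff_false, iff_false, not_and]
  rintro ⟨A, B, ε, δ, ⟨hABd, hAc, hBc, hε, hδ⟩, rfl⟩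
  rintro ⟨A', B', ε', δ', ⟨hABd', hAc', hBc', hε', hδ'⟩, hW⟩
  have hA : 1 ≤ A.card := hAc ▸ ha
  have hB : 1 ≤ B.card := hBc ▸ (ha.trans hab)
  have hA' : 1 ≤ A'.card := hAc' ▸ ha'
  have hB' : 1 ≤ B'.card := hBc' ▸ (ha'.trans hab')
  -- uvec A' ε' and uvec B' δ' lie in Wspan A B ε δ
  have hmemA : uvec A' ε' ∈ Wspan A B ε δ := by
    rw [hW]
    exact Submodule.subset_span (Set.mem_insert _ _)
  have hmemB : uvec B' δ' ∈ Wspan A B ε δ := by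
    rw [hW]
    exact Submodule.subset_span (Set.mem_insert_of_mem _ rfl)
  rw [Wspan, Submodule.mem_span_pair] at hmemA hmemB
  obtain ⟨s, t, hst⟩ := hmemA
  obtain ⟨s', t', hst'⟩ := hmemB
  have hCA := support_cases hABd hA hB hA' hε hδ hε' hst
  have hCB := support_cases hABd hA hB hB' hε hδ hδ' hst'
  have hAne : A.Nonempty := Finset.card_pos.mp hA
  have hBne : B.Nonempty := Finset.card_pos.mp hB
  have hdisj : Disjoint A' B' := hABd'
  have contra : ∀ X : Finset (Fin d), X.Nonempty → X ⊆ A' → X ⊆ B' → False := by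
    intro X hX h1 h2
    have : Disjoint X X := Disjoint.mono h1 h2 hdisj
    exact hX.ne_empty (by simpa using disjoint_self.mp this)
  rcases hCA with h1 | h1 | h1 <;> rcases hCB with h2 | h2 | h2
  · exact contra A hAne (le_of_eq h1.symm) (le_of_eq h2.symm)
  · refine hne ?_
    rw [Prod.mk.injEq]
    constructor
    · rw [← hAc, ← hAc', h1]
    · rw [← hBc, ← hBc', h2]
  · exact contra A hAne (le_of_eq h1.symm) (Finset.subset_union_left.trans (le_of_eq h2.symm))
  · have e1 : a' = b := by rw [← hAc', h1, hBc]
    have e2 : b' = a := by rw [← hBc', h2, hAc]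
    exact hne (by rw [Prod.mk.injEq]; omega)
  · exact contra B hBne (le_of_eq h1.symm) (le_of_eq h2.symm)
  · exact contra B hBne (le_of_eq h1.symm) (Finset.subset_union_right.trans (le_of_eq h2.symm))
  · exact contra A hAne (Finset.subset_union_left.trans (le_of_eq h1.symm)) (le_of_eq h2.symm)
  · exact contra B hBne (Finset.subset_union_right.trans (le_of_eq h1.symm)) (le_of_eq h2.symm)
  · exact contra A hAne (Finset.subset_union_left.trans (le_of_eq h1.symm))
      (Finset.subset_union_left.trans (le_of_eq h2.symm))
end

section
/- Let d ≥ 4 and let X = {V_1, …, V_N} be a family of N ≥ 2 pairwise distinct 2-dimensional linear subspaces of ℝ^d that is equi-chordal and is an equal-weight tight 2-fusion frame. Then N ≤ d(d+1)/2. Moreover, if N = d(d+1)/2, then ∑_{i,j=1}^N P'_{(2,2)}(V_i,V_j) = 0, so that X is a tight Grassmann 4-design on G_{2,d}. -/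
open scoped BigOperators

/-- Orthogonal projection onto a subspace `V` of `ℝ^d`, as a linear endomorphism. -/
noncomputable def proj {d : ℕ} (V : Submodule ℝ (EuclideanSpace ℝ (Fin d))) :
    EuclideanSpace ℝ (Fin d) →ₗ[ℝ] EuclideanSpace ℝ (Fin d) :=
  V.subtype ∘ₗ (V.orthogonalProjectionOnto).toLinearMap

/-- `tr(P_V P_W)`. -/
noncomputable def trP {d : ℕ} (V W : Submodule ℝ (EuclideanSpace ℝ (Fin d))) : ℝ :=
  LinearMap.trace ℝ (EuclideanSpace ℝ (Fin d)) (proj V ∘ₗ proj W)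

/-- `tr((P_V P_W)²)`. -/
noncomputable def trP2 {d : ℕ} (V W : Submodule ℝ (EuclideanSpace ℝ (Fin d))) : ℝ :=
  LinearMap.trace ℝ (EuclideanSpace ℝ (Fin d)) ((proj V ∘ₗ proj W) ∘ₗ (proj V ∘ₗ proj W))

/-- `e₂(V,W) = ((tr(P_V P_W))² − tr((P_V P_W)²))/2`, the second elementary symmetric
function of the squared principal-angle cosines for 2-dimensional subspaces. -/
noncomputable def e2fun {d : ℕ} (V W : Submodule ℝ (EuclideanSpace ℝ (Fin d))) : ℝ :=
  ((trP V W) ^ 2 - trP2 V W) / 2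

/-- Zonal polynomial `P_{(2)}` for `k = 2`, as a function of `e₁`. -/
noncomputable def P2d (d : ℕ) (e1 : ℝ) : ℝ :=
  (4 - (d : ℝ) * e1) / (2 * (2 - (d : ℝ)))

/-- Unnormalized zonal polynomial `P'_{(4)}` for `k = 2`, in the variables `(e₁, e₂)`. -/
noncomputable def P4d (d : ℕ) (e1 e2 : ℝ) : ℝ :=
  1 - (((d : ℝ) + 2) / 2) * e1 + (3 * ((d : ℝ) + 2) * ((d : ℝ) + 4) / 64) * e1 ^ 2 -
    (((d : ℝ) + 2) * ((d : ℝ) + 4) / 16) * e2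

/-- Unnormalized zonal polynomial `P'_{(2,2)}` for `k = 2`, in the variables `(e₁, e₂)`. -/
noncomputable def P22d (d : ℕ) (e1 e2 : ℝ) : ℝ :=
  1 - (((d : ℝ) - 1) / 2) * e1 + (((d : ℝ) - 1) * ((d : ℝ) - 2) / 2) * e2

open scoped RealInnerProductSpace

section Polar
variable {E : Type*} [AddCommGroup E]

lemma bexp_radd (φ : E → E → ℝ) (hadd : ∀ x x' y, φ (x + x') y = φ x y + φ x' y)
    (hsym : ∀ x y, φ x y = φ y x) (x y z : E) :
    φ x (y + z) = φ x y + φ x z := by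
  rw [hsym, hadd, hsym y x, hsym z x]

lemma bexp_add (φ : E → E → ℝ) (hadd : ∀ x x' y, φ (x + x') y = φ x y + φ x' y)
    (hsym : ∀ x y, φ x y = φ y x) (x y : E) :
    φ (x + y) (x + y) = φ x x + 2 * φ x y + φ y y := by
  rw [hadd, bexp_radd φ hadd hsym, bexp_radd φ hadd hsym, hsym y x]; ring

lemma bexp_neg (φ : E → E → ℝ) (hadd : ∀ x x' y, φ (x + x') y = φ x y + φ x' y) (x y : E) :
    φ (-x) y = -(φ x y) := by
  have h0 : φ 0 y = 0 := by
    have := hadd 0 0 y; simpa using this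
  have := hadd x (-x) y
  rw [add_neg_cancel, h0] at this
  linarith

lemma bexp_sub (φ : E → E → ℝ) (hadd : ∀ x x' y, φ (x + x') y = φ x y + φ x' y)
    (hsym : ∀ x y, φ x y = φ y x) (x y : E) :
    φ (x - y) (x - y) = φ x x - 2 * φ x y + φ y y := by
  have hn : ∀ u v : E, φ u (-v) = -(φ u v) := fun u v => by
    rw [hsym, bexp_neg φ hadd, hsym]
  rw [sub_eq_add_neg, bexp_add φ hadd hsym, hn, bexp_neg φ hadd, hn]; ring

variable {ι : Type*} [Fintype ι]

lemma polarize (b : ι → E → E → ℝ) (b0 : E → E → ℝ) (A : ℝ)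
    (haddb : ∀ i x x' y, b i (x + x') y = b i x y + b i x' y)
    (hsymb : ∀ i x y, b i x y = b i y x)
    (hadd0 : ∀ x x' y, b0 (x + x') y = b0 x y + b0 x' y)
    (hsym0 : ∀ x y, b0 x y = b0 y x)
    (hG : ∀ x, ∑ i, (b i x x)^2 = A * (b0 x x)^2) :
    ∀ x y z w, ∑ i, (b i x y * b i z w + b i x z * b i y w + b i x w * b i y z)
      = A * (b0 x y * b0 z w + b0 x z * b0 y w + b0 x w * b0 y z) := by
  have P1 : ∀ x y, ∑ i, (b i x x * b i y y + 2*(b i x y)^2)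
      = A * (b0 x x * b0 y y + 2*(b0 x y)^2) := by
    intro x y
    calc ∑ i, (b i x x * b i y y + 2*(b i x y)^2)
        = ∑ i, (((b i (x+y) (x+y))^2 + (b i (x-y) (x-y))^2
            - 2*(b i x x)^2 - 2*(b i y y)^2)/4) := by
          refine Finset.sum_congr rfl fun i _ => ?_
          rw [bexp_add (b i) (haddb i) (hsymb i), bexp_sub (b i) (haddb i) (hsymb i)]; ring
      _ = ((∑ i, (b i (x+y) (x+y))^2) + (∑ i, (b i (x-y) (x-y))^2)
            - 2*(∑ i, (b i x x)^2) - 2*(∑ i, (b i y y)^2))/4 := by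
          rw [← Finset.sum_div]
          congr 1
          rw [Finset.sum_sub_distrib, Finset.sum_sub_distrib, Finset.sum_add_distrib,
            ← Finset.mul_sum, ← Finset.mul_sum]
      _ = (A*(b0 (x+y) (x+y))^2 + A*(b0 (x-y) (x-y))^2
            - 2*(A*(b0 x x)^2) - 2*(A*(b0 y y)^2))/4 := by rw [hG, hG, hG, hG]
      _ = A * (b0 x x * b0 y y + 2*(b0 x y)^2) := by
          rw [bexp_add b0 hadd0 hsym0, bexp_sub b0 hadd0 hsym0]; ring
  have P2 : ∀ x y z, ∑ i, (b i x x * b i y z + 2*(b i x y)*(b i x z))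
      = A * (b0 x x * b0 y z + 2*(b0 x y)*(b0 x z)) := by
    intro x y z
    calc ∑ i, (b i x x * b i y z + 2*(b i x y)*(b i x z))
        = ∑ i, (((b i x x * b i (y+z) (y+z) + 2*(b i x (y+z))^2)
            - (b i x x * b i y y + 2*(b i x y)^2)
            - (b i x x * b i z z + 2*(b i x z)^2))/2) := by
          refine Finset.sum_congr rfl fun i _ => ?_
          rw [bexp_add (b i) (haddb i) (hsymb i),
            bexp_radd (b i) (haddb i) (hsymb i)]; ring
      _ = ((∑ i, (b i x x * b i (y+z) (y+z) + 2*(b i x (y+z))^2))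
            - (∑ i, (b i x x * b i y y + 2*(b i x y)^2))
            - (∑ i, (b i x x * b i z z + 2*(b i x z)^2)))/2 := by
          rw [← Finset.sum_div]
          congr 1
          rw [Finset.sum_sub_distrib, Finset.sum_sub_distrib]
      _ = (A * (b0 x x * b0 (y+z) (y+z) + 2*(b0 x (y+z))^2)
            - A * (b0 x x * b0 y y + 2*(b0 x y)^2)
            - A * (b0 x x * b0 z z + 2*(b0 x z)^2))/2 := by rw [P1, P1, P1]
      _ = A * (b0 x x * b0 y z + 2*(b0 x y)*(b0 x z)) := by
          rw [bexp_add b0 hadd0 hsym0, bexp_radd b0 hadd0 hsym0]; ring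
  intro x y z w
  calc ∑ i, (b i x y * b i z w + b i x z * b i y w + b i x w * b i y z)
      = ∑ i, (((b i (x+w) (x+w) * b i y z + 2*(b i (x+w) y)*(b i (x+w) z))
          - (b i x x * b i y z + 2*(b i x y)*(b i x z))
          - (b i w w * b i y z + 2*(b i w y)*(b i w z)))/2) := by
        refine Finset.sum_congr rfl fun i _ => ?_
        rw [bexp_add (b i) (haddb i) (hsymb i), haddb i x w y, haddb i x w z,
          hsymb i z w, hsymb i y w, hsymb i x w]
        ring
    _ = ((∑ i, (b i (x+w) (x+w) * b i y z + 2*(b i (x+w) y)*(b i (x+w) z)))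
          - (∑ i, (b i x x * b i y z + 2*(b i x y)*(b i x z)))
          - (∑ i, (b i w w * b i y z + 2*(b i w y)*(b i w z))))/2 := by
        rw [← Finset.sum_div]
        congr 1
        rw [Finset.sum_sub_distrib, Finset.sum_sub_distrib]
    _ = (A * (b0 (x+w) (x+w) * b0 y z + 2*(b0 (x+w) y)*(b0 (x+w) z))
          - A * (b0 x x * b0 y z + 2*(b0 x y)*(b0 x z))
          - A * (b0 w w * b0 y z + 2*(b0 w y)*(b0 w z)))/2 := by rw [P2, P2, P2]
    _ = A * (b0 x y * b0 z w + b0 x z * b0 y w + b0 x w * b0 y z) := by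
        rw [bexp_add b0 hadd0 hsym0, hadd0 x w y, hadd0 x w z,
          hsym0 z w, hsym0 y w, hsym0 x w]
        ring
end Polar

section Infra
variable {d : ℕ}

lemma proj_proj (V : Submodule ℝ (EuclideanSpace ℝ (Fin d))) (x : EuclideanSpace ℝ (Fin d)) :
    proj V (proj V x) = proj V x := by
  simp [proj, Submodule.orthogonalProjectionOnto_mem_subspace_eq_self]
  exact Submodule.starProjection_eq_self_iff.mpr (Submodule.starProjection_apply_mem V x)

lemma proj_comp_self (V : Submodule ℝ (EuclideanSpace ℝ (Fin d))) :
    proj V ∘ₗ proj V = proj V :=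
  LinearMap.ext fun x => proj_proj V x

lemma proj_symm (V : Submodule ℝ (EuclideanSpace ℝ (Fin d))) (x y : EuclideanSpace ℝ (Fin d)) :
    ⟪proj V x, y⟫ = ⟪x, proj V y⟫ := by
  simpa [proj] using Submodule.inner_starProjection_left_eq_right V x y

lemma range_proj (V : Submodule ℝ (EuclideanSpace ℝ (Fin d))) :
    LinearMap.range (proj V) = V := by
  apply le_antisymm
  · rintro _ ⟨x, rfl⟩; exact (V.orthogonalProjectionOnto x).2
  · intro v hv
    exact ⟨v, by simp [proj, Submodule.orthogonalProjectionOnto_mem_subspace_eq_self ⟨v, hv⟩]⟩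

lemma trace_proj (V : Submodule ℝ (EuclideanSpace ℝ (Fin d))) :
    LinearMap.trace ℝ _ (proj V) = (Module.finrank ℝ V : ℝ) := by
  have h : LinearMap.IsProj V (proj V) := by
    constructor
    · intro x; exact (V.orthogonalProjectionOnto x).2
    · intro x hx
      simp [proj, Submodule.orthogonalProjectionOnto_mem_subspace_eq_self ⟨x, hx⟩]
  exact h.trace

lemma trace_eq_sum (f : EuclideanSpace ℝ (Fin d) →ₗ[ℝ] EuclideanSpace ℝ (Fin d)) :
    LinearMap.trace ℝ _ f = ∑ a, f (EuclideanSpace.single a 1) a := by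
  rw [LinearMap.trace_eq_matrix_trace ℝ (EuclideanSpace.basisFun (Fin d) ℝ).toBasis f]
  rw [Matrix.trace]
  apply Finset.sum_congr rfl
  intro a _
  rw [Matrix.diag_apply, LinearMap.toMatrix_apply]
  simp only [EuclideanSpace.basisFun, OrthonormalBasis.coe_toBasis]
  simp
  rfl

lemma coord_eq_inner (v : EuclideanSpace ℝ (Fin d)) (a : Fin d) :
    v a = ⟪EuclideanSpace.single a (1:ℝ), v⟫ := by
  rw [EuclideanSpace.inner_single_left]; simp

lemma inner_sum_coord (u v : EuclideanSpace ℝ (Fin d)) :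
    ⟪u, v⟫ = ∑ a, u a * v a := by
  rw [PiLp.inner_apply]
  simp
  exact Finset.sum_congr rfl fun _ _ => mul_comm _ _

lemma trP_self (V : Submodule ℝ (EuclideanSpace ℝ (Fin d))) (h2 : Module.finrank ℝ V = 2) :
    trP V V = 2 := by
  rw [trP, proj_comp_self, trace_proj, h2]; norm_num

lemma trP_comm (V W : Submodule ℝ (EuclideanSpace ℝ (Fin d))) : trP V W = trP W V :=
  LinearMap.trace_mul_comm ℝ (proj V) (proj W)

lemma trP2_comm (V W : Submodule ℝ (EuclideanSpace ℝ (Fin d))) : trP2 V W = trP2 W V := by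
  have : (proj V ∘ₗ proj W) ∘ₗ (proj V ∘ₗ proj W)
      = proj V * (proj W * proj V * proj W) := by
    show _ = (proj V).comp _
    simp only [Module.End.mul_eq_comp, LinearMap.comp_assoc]
  rw [trP2, trP2, this, LinearMap.trace_mul_comm]
  rfl

lemma trP_nonneg (V W : Submodule ℝ (EuclideanSpace ℝ (Fin d))) : 0 ≤ trP V W := by
  have h : trP V W = LinearMap.trace ℝ _ ((proj V ∘ₗ proj W) ∘ₗ (proj W ∘ₗ proj V)) := by
    calc trP V W
        = LinearMap.trace ℝ _ ((proj V ∘ₗ proj V) ∘ₗ (proj W ∘ₗ proj W)) := by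
          rw [trP, proj_comp_self, proj_comp_self]
      _ = LinearMap.trace ℝ _ (proj V * (proj V * proj W * proj W)) := rfl
      _ = LinearMap.trace ℝ _ ((proj V * proj W * proj W) * proj V) :=
          LinearMap.trace_mul_comm ℝ _ _
      _ = LinearMap.trace ℝ _ ((proj V ∘ₗ proj W) ∘ₗ (proj W ∘ₗ proj V)) := rfl
  rw [h, trace_eq_sum]
  apply Finset.sum_nonneg
  intro a _
  have : ((proj V ∘ₗ proj W) ∘ₗ (proj W ∘ₗ proj V)) (EuclideanSpace.single a 1) a
      = ⟪proj W (proj V (EuclideanSpace.single a 1)), proj W (proj V (EuclideanSpace.single a 1))⟫ := by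
    rw [coord_eq_inner (((proj V ∘ₗ proj W) ∘ₗ proj W ∘ₗ proj V) (EuclideanSpace.single a 1)) a]
    simp only [LinearMap.comp_apply]
    rw [← proj_symm, ← proj_symm]
  rw [this]
  exact real_inner_self_nonneg

lemma proj_injective : Function.Injective (proj (d := d)) := by
  intro V W h
  rw [← range_proj V, ← range_proj W, h]

lemma trP_lt_two (V W : Submodule ℝ (EuclideanSpace ℝ (Fin d)))
    (h2V : Module.finrank ℝ V = 2) (h2W : Module.finrank ℝ W = 2) (hne : V ≠ W) :
    trP V W < 2 := by
  set D : EuclideanSpace ℝ (Fin d) →ₗ[ℝ] EuclideanSpace ℝ (Fin d) := proj V - proj W with hD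
  have hDapp : ∀ x, D x = proj V x - proj W x := fun x => rfl
  have hDsym : ∀ x y, ⟪D x, y⟫ = ⟪x, D y⟫ := by
    intro x y
    rw [hDapp, hDapp, inner_sub_left, inner_sub_right, proj_symm, proj_symm]
  have hmul : D * D = proj V * proj V - proj V * proj W - proj W * proj V + proj W * proj W := by
    rw [hD]; noncomm_ring
  have htr : LinearMap.trace ℝ _ (D * D) = 4 - 2 * trP V W := by
    rw [hmul]
    rw [map_add, map_sub, map_sub]
    have e1 : LinearMap.trace ℝ _ (proj V * proj V) = 2 := trP_self V h2V
    have e2 : LinearMap.trace ℝ _ (proj W * proj W) = 2 := trP_self W h2W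
    have e3 : LinearMap.trace ℝ _ (proj V * proj W) = trP V W := rfl
    have e4 : LinearMap.trace ℝ _ (proj W * proj V) = trP V W := (trP_comm V W).symm ▸ rfl
    rw [e1, e2, e3, e4]; ring
  have hsum : LinearMap.trace ℝ _ (D * D)
      = ∑ a, ⟪D (EuclideanSpace.single a 1), D (EuclideanSpace.single a 1)⟫ := by
    rw [show (D * D : _) = D ∘ₗ D from rfl, trace_eq_sum]
    apply Finset.sum_congr rfl
    intro a _
    rw [coord_eq_inner ((D ∘ₗ D) (EuclideanSpace.single a 1)) a, LinearMap.comp_apply,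
      ← hDsym]
  have hDne : D ≠ 0 := by
    rw [hD, sub_ne_zero]
    exact fun h => hne (proj_injective h)
  have hex : ∃ a, D (EuclideanSpace.single a 1) ≠ 0 := by
    by_contra hall
    push_neg at hall
    apply hDne
    apply Module.Basis.ext (EuclideanSpace.basisFun (Fin d) ℝ).toBasis
    intro a
    rw [OrthonormalBasis.coe_toBasis, EuclideanSpace.basisFun_apply]
    simp [hall a]
  obtain ⟨a0, ha0⟩ := hex
  have hpos : 0 < ∑ a, ⟪D (EuclideanSpace.single a 1), D (EuclideanSpace.single a 1)⟫ := by
    apply Finset.sum_pos'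
    · intro a _; exact real_inner_self_nonneg
    · refine ⟨a0, Finset.mem_univ a0, ?_⟩
      rw [real_inner_self_eq_norm_sq]
      exact pow_pos (norm_pos_iff.mpr ha0) 2
  rw [← hsum, htr] at hpos
  linarith

end Infra

section Sums

lemma sum_comm3 {α β γ : Type*} [Fintype α] [Fintype β] [Fintype γ] (F : α → β → γ → ℝ) :
    ∑ a, ∑ b, ∑ c, F a b c = ∑ c, ∑ a, ∑ b, F a b c := by
  calc ∑ a, ∑ b, ∑ c, F a b c
      = ∑ a, ∑ c, ∑ b, F a b c := Finset.sum_congr rfl (fun a _ => Finset.sum_comm)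
    _ = ∑ c, ∑ a, ∑ b, F a b c := Finset.sum_comm

lemma sum2_add {α β : Type*} [Fintype α] [Fintype β] (f g : α → β → ℝ) :
    ∑ a, ∑ b, (f a b + g a b) = (∑ a, ∑ b, f a b) + (∑ a, ∑ b, g a b) := by
  rw [← Finset.sum_add_distrib]
  exact Finset.sum_congr rfl fun a _ => Finset.sum_add_distrib

lemma sum2_mul {α β : Type*} [Fintype α] [Fintype β] (f : α → ℝ) (g : β → ℝ) :
    ∑ a, ∑ b, (f a * g b) = (∑ a, f a) * (∑ b, g b) := by
  rw [Finset.sum_mul_sum]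

lemma sum2_sub {α β : Type*} [Fintype α] [Fintype β] (f g : α → β → ℝ) :
    ∑ a, ∑ b, (f a b - g a b) = (∑ a, ∑ b, f a b) - (∑ a, ∑ b, g a b) := by
  rw [← Finset.sum_sub_distrib]
  exact Finset.sum_congr rfl fun a _ => Finset.sum_sub_distrib _ _

lemma sum2_div {α β : Type*} [Fintype α] [Fintype β] (f : α → β → ℝ) (r : ℝ) :
    ∑ a, ∑ b, (f a b / r) = (∑ a, ∑ b, f a b) / r := by
  calc ∑ a, ∑ b, (f a b / r) = ∑ a, ((∑ b, f a b) / r) :=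
        Finset.sum_congr rfl fun a _ => (Finset.sum_div _ _ _).symm
    _ = (∑ a, ∑ b, f a b) / r := (Finset.sum_div _ _ _).symm

lemma double_sum_split {N : ℕ} (hN1 : 1 ≤ N) (f : Fin N → Fin N → ℝ) (v w : ℝ)
    (hdiag : ∀ i, f i i = v) (hoff : ∀ i j, i ≠ j → f i j = w) :
    ∑ i, ∑ j, f i j = N * v + (N * ((N:ℝ) - 1)) * w := by
  have hrow : ∀ i : Fin N, ∑ j, f i j = v + ((N:ℝ)-1) * w := by
    intro i
    rw [← Finset.add_sum_erase _ _ (Finset.mem_univ i), hdiag]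
    congr 1
    rw [Finset.sum_congr rfl (fun j hj => hoff i j (fun h => (Finset.mem_erase.1 hj).1 h.symm)),
      Finset.sum_const, Finset.card_erase_of_mem (Finset.mem_univ i), Finset.card_univ,
      Fintype.card_fin, nsmul_eq_mul]
    push_cast [Nat.cast_sub hN1]
    ring
  rw [Finset.sum_congr rfl (fun i _ => hrow i), Finset.sum_const, Finset.card_univ,
    Fintype.card_fin, nsmul_eq_mul]
  ring

lemma sum_sum_affine {N : ℕ} (f g : Fin N → Fin N → ℝ) (k α β γ : ℝ) :
    ∑ i, ∑ j, (k + α * f i j + β * (f i j)^2 + γ * g i j)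
      = (N:ℝ)^2 * k + α * (∑ i, ∑ j, f i j) + β * (∑ i, ∑ j, (f i j)^2)
        + γ * (∑ i, ∑ j, g i j) := by
  rw [sum2_add, sum2_add, sum2_add]
  have h1 : ∑ (_ : Fin N), ∑ (_ : Fin N), k = (N:ℝ)^2 * k := by
    simp [Finset.sum_const, Finset.card_univ]
    ring
  have h2 : ∀ (h : Fin N → Fin N → ℝ) (co : ℝ),
      ∑ i, ∑ j, co * h i j = co * ∑ i, ∑ j, h i j := by
    intro h co
    rw [Finset.mul_sum]
    exact Finset.sum_congr rfl fun i _ => by rw [Finset.mul_sum]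
  rw [h1, h2, h2, h2]

end Sums


set_option maxHeartbeats 1000000 in
/-- an `ECTFF₂` on `G_{2,d}` (`d ≥ 4`, `N ≥ 2` pairwise distinct
2-dimensional subspaces, equi-chordal and an equal-weight tight 2-fusion frame)
satisfies `N ≤ d(d+1)/2`; moreover if `N = d(d+1)/2` then
`∑_{i,j} P'_{(2,2)}(V_i, V_j) = 0` (and the sums of `P_{(2)}` and `P'_{(4)}` vanish
as well), so that `X` is a tight Grassmann 4-design on `G_{2,d}`. -/
theorem stmt18 (d N : ℕ) (hd : 4 ≤ d) (hN : 2 ≤ N)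
    (V : Fin N → Submodule ℝ (EuclideanSpace ℝ (Fin d)))
    (hinj : Function.Injective V)
    (hdim : ∀ i, Module.finrank ℝ (V i) = 2)
    (hec : ∃ c : ℝ, ∀ i j, i ≠ j → trP (V i) (V j) = c)
    (htff : ∃ A : ℝ, 0 < A ∧ ∀ x : EuclideanSpace ℝ (Fin d),
      ∑ i, ‖proj (V i) x‖ ^ 4 = A * ‖x‖ ^ 4) :
    2 * N ≤ d * (d + 1) ∧
    (2 * N = d * (d + 1) →
      (∑ i, ∑ j, P2d d (trP (V i) (V j))) = 0 ∧
      (∑ i, ∑ j, P4d d (trP (V i) (V j)) (e2fun (V i) (V j))) = 0 ∧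
      (∑ i, ∑ j, P22d d (trP (V i) (V j)) (e2fun (V i) (V j))) = 0) := by
  classical
  obtain ⟨c, hc⟩ := hec
  obtain ⟨A, hA0, hG0⟩ := htff
  -- the bilinear forms
  set b : Fin N → EuclideanSpace ℝ (Fin d) → EuclideanSpace ℝ (Fin d) → ℝ :=
    fun i x y => ⟪x, proj (V i) y⟫ with hbdef
  set b0 : EuclideanSpace ℝ (Fin d) → EuclideanSpace ℝ (Fin d) → ℝ :=
    fun x y => ⟪x, y⟫ with hb0def
  have hb0 : ∀ x y, b0 x y = ⟪x, y⟫ := fun x y => rfl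
  have hbv : ∀ i x y, b i x y = ⟪x, proj (V i) y⟫ := fun i x y => rfl
  have hsymb : ∀ i x y, b i x y = b i y x := by
    intro i x y
    rw [hbv, hbv, ← proj_symm]
    exact real_inner_comm _ _
  have haddb : ∀ i x x' y, b i (x + x') y = b i x y + b i x' y := by
    intro i x x' y
    rw [hbv, hbv, hbv]
    exact inner_add_left x x' _
  have hadd0 : ∀ x x' y : EuclideanSpace ℝ (Fin d), b0 (x + x') y = b0 x y + b0 x' y :=
    fun x x' y => inner_add_left x x' y
  have hsym0 : ∀ x y : EuclideanSpace ℝ (Fin d), b0 x y = b0 y x :=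
    fun x y => real_inner_comm y x
  -- the quartic condition
  have hbxx : ∀ i x, b i x x = ‖proj (V i) x‖^2 := by
    intro i x
    rw [hbv, ← real_inner_self_eq_norm_sq, proj_symm, proj_proj]
  have hG : ∀ x : EuclideanSpace ℝ (Fin d), ∑ i, (b i x x)^2 = A * (b0 x x)^2 := by
    intro x
    calc ∑ i, (b i x x)^2 = ∑ i, ‖proj (V i) x‖^4 := by
          refine Finset.sum_congr rfl fun i _ => ?_
          rw [hbxx, ← pow_mul]
      _ = A * ‖x‖^4 := hG0 x
      _ = A * (b0 x x)^2 := by rw [hb0, real_inner_self_eq_norm_sq, ← pow_mul]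
  have hT := polarize b b0 A haddb hsymb hadd0 hsym0 hG
  -- coordinate helpers
  have hinner_e : ∀ (v : EuclideanSpace ℝ (Fin d)) (a : Fin d),
      ⟪EuclideanSpace.single a (1:ℝ), v⟫ = v a := fun v a => (coord_eq_inner v a).symm
  have hbe : ∀ i (x : EuclideanSpace ℝ (Fin d)) (c' : Fin d),
      b i x (EuclideanSpace.single c' 1) = proj (V i) x c' := by
    intro i x c'
    rw [hsymb, hbv]
    exact hinner_e _ _
  have hbee : ∀ i (a c' : Fin d),
      b i (EuclideanSpace.single a 1) (EuclideanSpace.single c' 1)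
        = proj (V i) (EuclideanSpace.single c' 1) a := by
    intro i a c'
    rw [hbv]
    exact hinner_e _ _
  have htrb : ∀ i, ∑ a, b i (EuclideanSpace.single a 1) (EuclideanSpace.single a 1) = 2 := by
    intro i
    have h1 : ∑ a, b i (EuclideanSpace.single a 1) (EuclideanSpace.single a 1)
        = LinearMap.trace ℝ _ (proj (V i)) := by
      rw [trace_eq_sum]
      exact Finset.sum_congr rfl fun a _ => hbee i a a
    rw [h1, trace_proj, hdim]
    norm_num
  have hb0ee : ∀ a c' : Fin d,
      b0 (EuclideanSpace.single a (1:ℝ)) (EuclideanSpace.single c' (1:ℝ))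
        = EuclideanSpace.single c' (1:ℝ) a := by
    intro a c'
    rw [hb0]
    exact hinner_e _ _
  have hb0self : ∀ a : Fin d,
      b0 (EuclideanSpace.single a (1:ℝ)) (EuclideanSpace.single a (1:ℝ)) = 1 := by
    intro a
    rw [hb0ee]
    simp [EuclideanSpace.single_apply]
  have hb0x : ∀ (x : EuclideanSpace ℝ (Fin d)) (c' : Fin d),
      b0 x (EuclideanSpace.single c' 1) = x c' := by
    intro x c'
    rw [hsym0, hb0]
    exact hinner_e _ _
  -- the averaged (degree-2) identity
  have hSb : ∀ x y : EuclideanSpace ℝ (Fin d),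
      4 * (∑ i, b i x y) = A * ((d:ℝ) + 2) * b0 x y := by
    intro x y
    have hL : ∀ i, ∑ cc, (b i x y * b i (EuclideanSpace.single cc 1) (EuclideanSpace.single cc 1)
        + b i x (EuclideanSpace.single cc 1) * b i y (EuclideanSpace.single cc 1)
        + b i x (EuclideanSpace.single cc 1) * b i y (EuclideanSpace.single cc 1))
        = 4 * b i x y := by
      intro i
      rw [Finset.sum_add_distrib, Finset.sum_add_distrib, ← Finset.mul_sum, htrb]
      have h2 : ∑ cc, b i x (EuclideanSpace.single cc 1) * b i y (EuclideanSpace.single cc 1)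
          = b i x y := by
        have e1 : ∀ cc, b i x (EuclideanSpace.single cc 1) * b i y (EuclideanSpace.single cc 1)
            = proj (V i) x cc * proj (V i) y cc := fun cc => by rw [hbe, hbe]
        rw [Finset.sum_congr rfl fun cc _ => e1 cc, ← inner_sum_coord, proj_symm, proj_proj]
      rw [h2]
      ring
    have hR : ∑ cc, (A * (b0 x y * b0 (EuclideanSpace.single cc 1) (EuclideanSpace.single cc 1)
        + b0 x (EuclideanSpace.single cc 1) * b0 y (EuclideanSpace.single cc 1)
        + b0 x (EuclideanSpace.single cc 1) * b0 y (EuclideanSpace.single cc 1)))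
        = A * ((d:ℝ) + 2) * b0 x y := by
      rw [← Finset.mul_sum, Finset.sum_add_distrib, Finset.sum_add_distrib]
      have e1 : ∑ cc, b0 x y * b0 (EuclideanSpace.single cc (1:ℝ)) (EuclideanSpace.single cc (1:ℝ))
          = (d:ℝ) * b0 x y := by
        rw [Finset.sum_congr rfl fun cc _ => by rw [hb0self cc, mul_one],
          Finset.sum_const, Finset.card_univ, Fintype.card_fin, nsmul_eq_mul]
      have e2 : ∑ cc, b0 x (EuclideanSpace.single cc 1) * b0 y (EuclideanSpace.single cc 1)
          = b0 x y := by
        rw [Finset.sum_congr rfl fun cc _ => by rw [hb0x, hb0x], ← inner_sum_coord]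
      rw [e1, e2]
      ring
    calc 4 * (∑ i, b i x y) = ∑ i, 4 * b i x y := by rw [Finset.mul_sum]
      _ = ∑ i, ∑ cc, (b i x y * b i (EuclideanSpace.single cc 1) (EuclideanSpace.single cc 1)
          + b i x (EuclideanSpace.single cc 1) * b i y (EuclideanSpace.single cc 1)
          + b i x (EuclideanSpace.single cc 1) * b i y (EuclideanSpace.single cc 1)) :=
          Finset.sum_congr rfl fun i _ => (hL i).symm
      _ = ∑ cc, ∑ i, (b i x y * b i (EuclideanSpace.single cc 1) (EuclideanSpace.single cc 1)
          + b i x (EuclideanSpace.single cc 1) * b i y (EuclideanSpace.single cc 1)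
          + b i x (EuclideanSpace.single cc 1) * b i y (EuclideanSpace.single cc 1)) :=
          Finset.sum_comm
      _ = ∑ cc, (A * (b0 x y * b0 (EuclideanSpace.single cc 1) (EuclideanSpace.single cc 1)
          + b0 x (EuclideanSpace.single cc 1) * b0 y (EuclideanSpace.single cc 1)
          + b0 x (EuclideanSpace.single cc 1) * b0 y (EuclideanSpace.single cc 1))) :=
          Finset.sum_congr rfl fun cc _ =>
            hT x y (EuclideanSpace.single cc 1) (EuclideanSpace.single cc 1)
      _ = A * ((d:ℝ) + 2) * b0 x y := hR
  have hSb' : ∀ x y : EuclideanSpace ℝ (Fin d),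
      ∑ i, b i x y = A * ((d:ℝ) + 2) / 4 * b0 x y := by
    intro x y
    have := hSb x y
    linarith
  -- trace normalization : A (d+2) d = 8 N
  have hkd : A * ((d:ℝ) + 2) * d = 8 * N := by
    have H : ∑ a : Fin d, (∑ i, b i (EuclideanSpace.single a 1) (EuclideanSpace.single a 1))
        = ∑ a : Fin d, A * ((d:ℝ) + 2) / 4
          * b0 (EuclideanSpace.single a 1) (EuclideanSpace.single a 1) :=
      Finset.sum_congr rfl fun a _ => hSb' _ _
    rw [Finset.sum_comm] at H
    rw [Finset.sum_congr rfl fun i (_ : i ∈ Finset.univ) => htrb i, Finset.sum_const,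
      Finset.card_univ, Fintype.card_fin, nsmul_eq_mul] at H
    rw [Finset.sum_congr rfl fun a (_ : a ∈ Finset.univ) => by rw [hb0self a, mul_one],
      Finset.sum_const, Finset.card_univ, Fintype.card_fin, nsmul_eq_mul] at H
    -- H : N * 2 = d * (A*(d+2)/4)
    have hd' : ((d:ℕ):ℝ) = (d:ℝ) := rfl
    nlinarith [H]
  -- row sums of trP
  have htrPsum : ∀ i j, trP (V i) (V j)
      = ∑ a, b j (proj (V i) (EuclideanSpace.single a 1)) (EuclideanSpace.single a 1) := by
    intro i j
    rw [trP_comm, trP, trace_eq_sum]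
    refine Finset.sum_congr rfl fun a _ => ?_
    rw [hbe]
    rfl
  have hrow : ∀ i, ∑ j, trP (V i) (V j) = A * ((d:ℝ)+2) / 2 := by
    intro i
    have step1 : ∑ j, trP (V i) (V j)
        = ∑ a : Fin d, ∑ j, b j (proj (V i) (EuclideanSpace.single a 1))
            (EuclideanSpace.single a 1) := by
      rw [Finset.sum_congr rfl fun j (_ : j ∈ Finset.univ) => htrPsum i j]
      exact Finset.sum_comm
    rw [step1]
    have step2 : ∀ a : Fin d, ∑ j, b j (proj (V i) (EuclideanSpace.single a 1))
        (EuclideanSpace.single a 1)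
        = A * ((d:ℝ)+2)/4 * (proj (V i) (EuclideanSpace.single a 1) a) := by
      intro a
      rw [hSb', hb0x]
    rw [Finset.sum_congr rfl fun a _ => step2 a, ← Finset.mul_sum]
    have step3 : ∑ a, proj (V i) (EuclideanSpace.single a 1) a = 2 := by
      rw [← trace_eq_sum, trace_proj, hdim]
      norm_num
    rw [step3]
    ring
  have hS1v : ∑ i, ∑ j, trP (V i) (V j) = (N:ℝ) * A * ((d:ℝ)+2) / 2 := by
    rw [Finset.sum_congr rfl fun i (_ : i ∈ Finset.univ) => hrow i, Finset.sum_const,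
      Finset.card_univ, Fintype.card_fin, nsmul_eq_mul]
    ring
  -- the contracted degree-4 identity
  have hj4 : ∀ j, ∑ i, ((trP (V i) (V j))^2 + 2 * trP2 (V i) (V j)) = 8 * A := by
    intro j
    set u : Fin d → EuclideanSpace ℝ (Fin d) :=
      fun a => proj (V j) (EuclideanSpace.single a 1) with hudef
    have hu : ∀ a, u a = proj (V j) (EuclideanSpace.single a 1) := fun a => rfl
    -- per-i component sums
    have hX : ∀ i, ∑ a, b i (EuclideanSpace.single a 1) (u a) = trP (V i) (V j) := by
      intro i
      rw [trP, trace_eq_sum]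
      refine Finset.sum_congr rfl fun a _ => ?_
      rw [hbv, hinner_e]
      rfl
    have hYY : ∀ i, ∑ a', ∑ a,
        b i (EuclideanSpace.single a 1) (EuclideanSpace.single a' 1) * b i (u a) (u a')
        = trP2 (V i) (V j) := by
      intro i
      rw [trP2, trace_eq_sum]
      refine Finset.sum_congr rfl fun a' _ => ?_
      have hterm : ∀ a, b i (EuclideanSpace.single a 1) (EuclideanSpace.single a' 1)
          * b i (u a) (u a')
          = proj (V i) (EuclideanSpace.single a' 1) a
            * (proj (V j) (proj (V i) (u a'))) a := by
        intro a
        rw [hbee]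
        congr 1
        rw [hbv, hu, proj_symm, hinner_e]
      rw [Finset.sum_congr rfl fun a _ => hterm a,
        ← inner_sum_coord (proj (V i) (EuclideanSpace.single a' 1))
          (proj (V j) (proj (V i) (u a'))), proj_symm, hinner_e]
      rfl
    have hZZ : ∀ i, ∑ a', ∑ a,
        b i (EuclideanSpace.single a 1) (u a') * b i (u a) (EuclideanSpace.single a' 1)
        = trP2 (V i) (V j) := by
      intro i
      rw [trP2_comm, trP2, trace_eq_sum]
      refine Finset.sum_congr rfl fun a' _ => ?_
      have hterm : ∀ a, b i (EuclideanSpace.single a 1) (u a')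
          * b i (u a) (EuclideanSpace.single a' 1)
          = (proj (V i) (u a')) a
            * (proj (V j) (proj (V i) (EuclideanSpace.single a' 1))) a := by
        intro a
        rw [hbv, hinner_e]
        congr 1
        rw [hbv, hu, proj_symm, hinner_e]
      rw [Finset.sum_congr rfl fun a _ => hterm a,
        ← inner_sum_coord (proj (V i) (u a'))
          (proj (V j) (proj (V i) (EuclideanSpace.single a' 1))), proj_symm, hu,
        proj_symm, hinner_e]
      rfl
    -- per-i combined
    have hPer : ∀ i, ∑ a, ∑ a',
        (b i (EuclideanSpace.single a 1) (u a) * b i (EuclideanSpace.single a' 1) (u a')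
          + b i (EuclideanSpace.single a 1) (EuclideanSpace.single a' 1) * b i (u a) (u a')
          + b i (EuclideanSpace.single a 1) (u a') * b i (u a) (EuclideanSpace.single a' 1))
        = (trP (V i) (V j))^2 + 2 * trP2 (V i) (V j) := by
      intro i
      rw [sum2_add, sum2_add, sum2_mul, hX i]
      have h2 : ∑ a, ∑ a',
          b i (EuclideanSpace.single a 1) (EuclideanSpace.single a' 1) * b i (u a) (u a')
          = trP2 (V i) (V j) := by
        rw [Finset.sum_comm]
        exact hYY i
      have h3 : ∑ a, ∑ a',
          b i (EuclideanSpace.single a 1) (u a') * b i (u a) (EuclideanSpace.single a' 1)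
          = trP2 (V i) (V j) := by
        rw [Finset.sum_comm]
        exact hZZ i
      rw [h2, h3]
      ring
    -- RHS component sums
    have hR1 : ∑ a, b0 (EuclideanSpace.single a 1) (u a) = 2 := by
      have h1 : ∀ a : Fin d, b0 (EuclideanSpace.single a 1) (u a)
          = proj (V j) (EuclideanSpace.single a 1) a := fun a => by
        rw [hb0, hinner_e, hu]
      rw [Finset.sum_congr rfl fun a _ => h1 a, ← trace_eq_sum, trace_proj, hdim]
      norm_num
    have hR2 : ∑ a', ∑ a, b0 (EuclideanSpace.single a 1) (EuclideanSpace.single a' 1)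
        * b0 (u a) (u a') = 2 := by
      have h1 : ∀ a', ∑ a, b0 (EuclideanSpace.single a 1) (EuclideanSpace.single a' 1)
          * b0 (u a) (u a') = proj (V j) (EuclideanSpace.single a' 1) a' := by
        intro a'
        have hterm : ∀ a, b0 (EuclideanSpace.single a 1) (EuclideanSpace.single a' 1)
            * b0 (u a) (u a')
            = (EuclideanSpace.single a' (1:ℝ)) a * (proj (V j) (u a')) a := by
          intro a
          rw [hb0, hinner_e]
          congr 1
          rw [hb0, hu, proj_symm, hinner_e]
        rw [Finset.sum_congr rfl fun a _ => hterm a,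
          ← inner_sum_coord (EuclideanSpace.single a' (1:ℝ)) (proj (V j) (u a')),
          hinner_e, hu, proj_proj]
      rw [Finset.sum_congr rfl fun a' _ => h1 a', ← trace_eq_sum, trace_proj, hdim]
      norm_num
    have hR3 : ∑ a', ∑ a, b0 (EuclideanSpace.single a 1) (u a')
        * b0 (u a) (EuclideanSpace.single a' 1) = 2 := by
      have h1 : ∀ a', ∑ a, b0 (EuclideanSpace.single a 1) (u a')
          * b0 (u a) (EuclideanSpace.single a' 1)
          = proj (V j) (EuclideanSpace.single a' 1) a' := by
        intro a'
        have hterm : ∀ a, b0 (EuclideanSpace.single a 1) (u a')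
            * b0 (u a) (EuclideanSpace.single a' 1)
            = (u a') a * (u a') a := by
          intro a
          rw [hb0, hinner_e]
          congr 1
          rw [hb0, hu, proj_symm, hinner_e, hu]
        rw [Finset.sum_congr rfl fun a _ => hterm a,
          ← inner_sum_coord (u a') (u a'), hu, proj_symm, hinner_e, proj_proj]
      rw [Finset.sum_congr rfl fun a' _ => h1 a', ← trace_eq_sum, trace_proj, hdim]
      norm_num
    have hRtot : ∑ a, ∑ a',
        (A * (b0 (EuclideanSpace.single a 1) (u a) * b0 (EuclideanSpace.single a' 1) (u a')
          + b0 (EuclideanSpace.single a 1) (EuclideanSpace.single a' 1) * b0 (u a) (u a')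
          + b0 (EuclideanSpace.single a 1) (u a') * b0 (u a) (EuclideanSpace.single a' 1)))
        = 8 * A := by
      have hpull : ∑ a, ∑ a',
          (A * (b0 (EuclideanSpace.single a 1) (u a) * b0 (EuclideanSpace.single a' 1) (u a')
            + b0 (EuclideanSpace.single a 1) (EuclideanSpace.single a' 1) * b0 (u a) (u a')
            + b0 (EuclideanSpace.single a 1) (u a') * b0 (u a) (EuclideanSpace.single a' 1)))
          = A * ∑ a, ∑ a',
            (b0 (EuclideanSpace.single a 1) (u a) * b0 (EuclideanSpace.single a' 1) (u a')
            + b0 (EuclideanSpace.single a 1) (EuclideanSpace.single a' 1) * b0 (u a) (u a')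
            + b0 (EuclideanSpace.single a 1) (u a') * b0 (u a) (EuclideanSpace.single a' 1)) := by
        rw [Finset.mul_sum]
        exact Finset.sum_congr rfl fun a _ => (Finset.mul_sum _ _ _).symm
      rw [hpull, sum2_add, sum2_add, sum2_mul, hR1]
      have h2 : ∑ a, ∑ a', b0 (EuclideanSpace.single a 1) (EuclideanSpace.single a' 1)
          * b0 (u a) (u a') = 2 := by rw [Finset.sum_comm]; exact hR2
      have h3 : ∑ a, ∑ a', b0 (EuclideanSpace.single a 1) (u a')
          * b0 (u a) (EuclideanSpace.single a' 1) = 2 := by rw [Finset.sum_comm]; exact hR3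
      rw [h2, h3]
      ring
    calc ∑ i, ((trP (V i) (V j))^2 + 2 * trP2 (V i) (V j))
        = ∑ i, ∑ a, ∑ a',
          (b i (EuclideanSpace.single a 1) (u a) * b i (EuclideanSpace.single a' 1) (u a')
          + b i (EuclideanSpace.single a 1) (EuclideanSpace.single a' 1) * b i (u a) (u a')
          + b i (EuclideanSpace.single a 1) (u a') * b i (u a) (EuclideanSpace.single a' 1)) :=
          Finset.sum_congr rfl fun i _ => (hPer i).symm
      _ = ∑ a, ∑ a', ∑ i,
          (b i (EuclideanSpace.single a 1) (u a) * b i (EuclideanSpace.single a' 1) (u a')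
          + b i (EuclideanSpace.single a 1) (EuclideanSpace.single a' 1) * b i (u a) (u a')
          + b i (EuclideanSpace.single a 1) (u a') * b i (u a) (EuclideanSpace.single a' 1)) :=
          (sum_comm3 _).symm
      _ = ∑ a, ∑ a',
          (A * (b0 (EuclideanSpace.single a 1) (u a) * b0 (EuclideanSpace.single a' 1) (u a')
          + b0 (EuclideanSpace.single a 1) (EuclideanSpace.single a' 1) * b0 (u a) (u a')
          + b0 (EuclideanSpace.single a 1) (u a') * b0 (u a) (EuclideanSpace.single a' 1))) := by
          refine Finset.sum_congr rfl fun a _ => Finset.sum_congr rfl fun a' _ => ?_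
          exact hT (EuclideanSpace.single a 1) (u a) (EuclideanSpace.single a' 1) (u a')
      _ = 8 * A := hRtot
  have hF4 : ∑ i, ∑ j, ((trP (V i) (V j))^2 + 2 * trP2 (V i) (V j)) = 8 * A * N := by
    rw [Finset.sum_comm]
    rw [Finset.sum_congr rfl fun j (_ : j ∈ Finset.univ) => hj4 j, Finset.sum_const,
      Finset.card_univ, Fintype.card_fin, nsmul_eq_mul]
    ring
  -- the common chordal value
  have hc0 : 0 ≤ c := by
    rw [← hc ⟨0, by omega⟩ ⟨1, by omega⟩ (by simp [Fin.ext_iff])]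
    exact trP_nonneg _ _
  have hc2 : c < 2 := by
    rw [← hc ⟨0, by omega⟩ ⟨1, by omega⟩ (by simp [Fin.ext_iff])]
    refine trP_lt_two _ _ (hdim _) (hdim _) (fun h => ?_)
    have := hinj h
    simp [Fin.ext_iff] at this
  -- linear independence and the bound
  have hbound : N ≤ Fintype.card (Sym2 (Fin d)) := by
    set φ : Fin N → (Sym2 (Fin d) → ℝ) := fun i => Sym2.lift
      ⟨fun a a' => b i (EuclideanSpace.single a 1) (EuclideanSpace.single a' 1),
        fun a a' => hsymb i _ _⟩ with hphidef
    have hLI : LinearIndependent ℝ φ := by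
      rw [Fintype.linearIndependent_iff]
      intro g hg
      have hZc : ∀ a a' : Fin d,
          ∑ i, g i * b i (EuclideanSpace.single a 1) (EuclideanSpace.single a' 1) = 0 := by
        intro a a'
        have h1 := congrFun hg (s(a, a'))
        rw [show ((∑ i, g i • φ i) (s(a, a'))) = ∑ i, (g i • φ i) (s(a, a'))
          from Finset.sum_apply _ _ _] at h1
        simp only [Pi.smul_apply, smul_eq_mul, Pi.zero_apply, hphidef, Sym2.lift_mk] at h1
        exact h1
      set Z : EuclideanSpace ℝ (Fin d) →ₗ[ℝ] EuclideanSpace ℝ (Fin d) :=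
        ∑ i, g i • proj (V i) with hZdef
      have hZapp : ∀ a' a : Fin d, Z (EuclideanSpace.single a' 1) a
          = ∑ i, g i * b i (EuclideanSpace.single a 1) (EuclideanSpace.single a' 1) := by
        intro a' a
        have h1 : Z (EuclideanSpace.single a' 1)
            = ∑ i, g i • proj (V i) (EuclideanSpace.single a' 1) := by
          rw [hZdef, LinearMap.sum_apply]
          exact Finset.sum_congr rfl fun i _ => rfl
        rw [h1]
        rw [show ((∑ i, g i • proj (V i) (EuclideanSpace.single a' 1)) a)
          = ∑ i, (g i • proj (V i) (EuclideanSpace.single a' 1)) a from by rw [WithLp.ofLp_sum, Finset.sum_apply]]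
        refine Finset.sum_congr rfl fun i _ => ?_
        rw [hbee]
        rfl
      have hZ0 : Z = 0 := by
        apply Module.Basis.ext (EuclideanSpace.basisFun (Fin d) ℝ).toBasis
        intro a'
        rw [OrthonormalBasis.coe_toBasis, EuclideanSpace.basisFun_apply]
        have : ∀ a, Z (EuclideanSpace.single a' 1) a = 0 := fun a => by
          rw [hZapp a' a, hZc a a']
        ext a
        rw [this a]
        rfl
      have hexp : LinearMap.trace ℝ _ (Z * Z)
          = ∑ i, g i * (∑ j', g j' * trP (V i) (V j')) := by
        have h1 : Z * Z = ∑ i, g i • (proj (V i) * Z) := by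
          conv_lhs => rw [hZdef]
          rw [Finset.sum_mul]
          exact Finset.sum_congr rfl fun i _ => smul_mul_assoc _ _ _
        rw [h1, map_sum]
        refine Finset.sum_congr rfl fun i _ => ?_
        rw [map_smul, smul_eq_mul]
        congr 1
        have h2 : proj (V i) * Z = ∑ j', g j' • (proj (V i) * proj (V j')) := by
          conv_lhs => rw [hZdef]
          rw [Finset.mul_sum]
          exact Finset.sum_congr rfl fun j' _ => mul_smul_comm _ _ _
        rw [h2, map_sum]
        refine Finset.sum_congr rfl fun j' _ => ?_
        rw [map_smul, smul_eq_mul]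
        rfl
      rw [hZ0] at hexp
      simp only [zero_mul, map_zero] at hexp
      set G : ℝ := ∑ i, g i with hGdef
      have hrowg : ∀ i, ∑ j', g j' * trP (V i) (V j') = 2 * g i + c * (G - g i) := by
        intro i
        rw [← Finset.add_sum_erase _ _ (Finset.mem_univ i), trP_self _ (hdim i)]
        have h3 : ∑ j' ∈ Finset.univ.erase i, g j' * trP (V i) (V j')
            = ∑ j' ∈ Finset.univ.erase i, g j' * c := by
          refine Finset.sum_congr rfl fun j' hj' => ?_
          rw [hc i j' (fun h => (Finset.mem_erase.1 hj').1 h.symm)]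
        rw [h3, ← Finset.sum_mul, Finset.sum_erase_eq_sub (Finset.mem_univ i), ← hGdef]
        ring
      have hkey : 0 = (2 - c) * (∑ i, (g i)^2) + c * G^2 := by
        have h4 : ∑ i, g i * (2 * g i + c * (G - g i))
            = (2 - c) * (∑ i, (g i)^2) + c * G^2 := by
          rw [Finset.sum_congr rfl fun i (_ : i ∈ Finset.univ) =>
            (by ring : g i * (2 * g i + c * (G - g i)) = (2-c) * (g i)^2 + (c*G) * g i)]
          rw [Finset.sum_add_distrib, ← Finset.mul_sum, ← Finset.mul_sum, ← hGdef]
          ring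
        have h5 : ∑ i, g i * (∑ j', g j' * trP (V i) (V j'))
            = ∑ i, g i * (2 * g i + c * (G - g i)) :=
          Finset.sum_congr rfl fun i _ => by rw [hrowg i]
        rw [← h4, ← h5]
        exact hexp
      have hSgnn : (0:ℝ) ≤ ∑ i, (g i)^2 :=
        Finset.sum_nonneg fun i _ => sq_nonneg (g i)
      have hsq : ∑ i, (g i)^2 = 0 := by nlinarith [sq_nonneg G]
      intro i
      have h5 := (Finset.sum_eq_zero_iff_of_nonneg
        (fun i (_ : i ∈ Finset.univ) => sq_nonneg (g i))).1 hsq i (Finset.mem_univ i)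
      exact (pow_eq_zero_iff (by norm_num : 2 ≠ 0)).1 h5
    have h4 := hLI.fintype_card_le_finrank
    rwa [Fintype.card_fin, Module.finrank_fintype_fun_eq_card] at h4
  have hmain : 2 * N ≤ d * (d + 1) := by
    have hcard : Fintype.card (Sym2 (Fin d)) = (d+1).choose 2 := by
      rw [Sym2.card, Fintype.card_fin]
    have h1 : (d+1).choose 2 = (d+1) * d / 2 := by
      rw [Nat.choose_two_right]
      simp
    have hmul : (d+1) * d = d * (d+1) := Nat.mul_comm _ _
    obtain ⟨k, hk⟩ := Nat.even_mul_succ_self d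
    rw [hcard, h1] at hbound
    omega
  refine ⟨hmain, ?_⟩
  intro heq
  -- scalars
  set S1 : ℝ := ∑ i, ∑ j, trP (V i) (V j) with hS1def
  set Ssq : ℝ := ∑ i, ∑ j, (trP (V i) (V j))^2 with hSsqdef
  set St2 : ℝ := ∑ i, ∑ j, trP2 (V i) (V j) with hSt2def
  set Se2 : ℝ := ∑ i, ∑ j, e2fun (V i) (V j) with hSe2def
  have hNr : (N:ℝ) = (d:ℝ) * ((d:ℝ)+1) / 2 := by
    have h1 : ((2 * N : ℕ) : ℝ) = ((d * (d+1) : ℕ) : ℝ) := by rw [heq]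
    push_cast at h1
    linarith
  have hdR : (4:ℝ) ≤ (d:ℝ) := by exact_mod_cast hd
  have hNR : (2:ℝ) ≤ (N:ℝ) := by exact_mod_cast hN
  have hd0 : (d:ℝ) ≠ 0 := by linarith
  have hd2 : (d:ℝ) + 2 ≠ 0 := by linarith
  have hd2' : (2:ℝ) - (d:ℝ) ≠ 0 := by linarith
  have hNN1 : (N:ℝ) * ((N:ℝ) - 1) ≠ 0 := by nlinarith
  have hN0 : (N:ℝ) ≠ 0 := by linarith
  have hN1 : (N:ℝ) - 1 ≠ 0 := by linarith
  -- value of A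
  have hAv : A = 8 * N / ((d:ℝ) * ((d:ℝ)+2)) := by
    field_simp
    linarith [hkd]
  have hS1v' : S1 = 4 * (N:ℝ)^2 / d := by
    rw [hS1v, hAv]
    field_simp
    ring
  -- split sums by equichordality
  have hS1c : S1 = (N:ℝ) * 2 + ((N:ℝ) * ((N:ℝ)-1)) * c := by
    rw [hS1def]
    exact double_sum_split (by omega) _ 2 c (fun i => trP_self _ (hdim i)) hc
  have hSsqc : Ssq = (N:ℝ) * 4 + ((N:ℝ) * ((N:ℝ)-1)) * c^2 := by
    rw [hSsqdef]
    refine double_sum_split (by omega) _ 4 (c^2) (fun i => ?_) (fun i j hij => ?_)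
    · rw [trP_self _ (hdim i)]; norm_num
    · rw [hc i j hij]
  have hcv : c = (S1 - 2*(N:ℝ)) / ((N:ℝ) * ((N:ℝ)-1)) := by
    rw [eq_div_iff hNN1]
    linarith [hS1c]
  -- relations among the sums
  have hF4' : Ssq + 2 * St2 = 8 * A * N := by
    rw [hSsqdef, hSt2def, ← hF4, sum2_add]
    congr 1
    rw [Finset.mul_sum]
    exact Finset.sum_congr rfl fun i _ => Finset.mul_sum _ _ _
  have hE2' : Se2 = (Ssq - St2) / 2 := by
    rw [hSe2def, hSsqdef, hSt2def]
    rw [show (∑ i, ∑ j, e2fun (V i) (V j))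
        = ∑ i, ∑ j, (((trP (V i) (V j))^2 - trP2 (V i) (V j)) / 2) from rfl]
    rw [sum2_div, sum2_sub]
  have hSe2v : Se2 = 3/4 * Ssq - 2 * A * (N:ℝ) := by
    rw [hE2']
    linarith [hF4']
  refine ⟨?_, ?_, ?_⟩
  · -- P2d sum
    have hpush : ∑ i, ∑ j, P2d d (trP (V i) (V j))
        = (N:ℝ)^2 * (4/(2*(2-(d:ℝ)))) + (-((d:ℝ)/(2*(2-(d:ℝ))))) * S1
          + 0 * Ssq + 0 * St2 := by
      rw [hS1def, hSsqdef, hSt2def]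
      rw [← sum_sum_affine (fun i j => trP (V i) (V j)) (fun i j => trP2 (V i) (V j))
        (4/(2*(2-(d:ℝ)))) (-((d:ℝ)/(2*(2-(d:ℝ))))) 0 0]
      refine Finset.sum_congr rfl fun i _ => Finset.sum_congr rfl fun j _ => ?_
      simp only [P2d]
      ring
    rw [hpush, hS1v']
    field_simp
    ring
  · -- P4d sum
    have hpush : ∑ i, ∑ j, P4d d (trP (V i) (V j)) (e2fun (V i) (V j))
        = (N:ℝ)^2 * 1 + (-(((d:ℝ)+2)/2)) * S1
          + (3*((d:ℝ)+2)*((d:ℝ)+4)/64) * Ssq + (-(((d:ℝ)+2)*((d:ℝ)+4)/16)) * Se2 := by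
      rw [hS1def, hSsqdef, hSe2def]
      rw [← sum_sum_affine (fun i j => trP (V i) (V j)) (fun i j => e2fun (V i) (V j))
        1 (-(((d:ℝ)+2)/2)) (3*((d:ℝ)+2)*((d:ℝ)+4)/64) (-(((d:ℝ)+2)*((d:ℝ)+4)/16))]
      refine Finset.sum_congr rfl fun i _ => Finset.sum_congr rfl fun j _ => ?_
      simp only [P4d]
      ring
    rw [hpush]
    have hS1vv : S1 = (N:ℝ) * A * ((d:ℝ)+2) / 2 := by rw [hS1def]; exact hS1v
    linear_combination (-(((d:ℝ)+2)/2)) * hS1vv + (-(((d:ℝ)+2)*((d:ℝ)+4)/16)) * hSe2v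
      + (-(N:ℝ)/8) * hkd
  · -- P22d sum
    have hpush : ∑ i, ∑ j, P22d d (trP (V i) (V j)) (e2fun (V i) (V j))
        = (N:ℝ)^2 * 1 + (-(((d:ℝ)-1)/2)) * S1
          + 0 * Ssq + (((d:ℝ)-1)*((d:ℝ)-2)/2) * Se2 := by
      rw [hS1def, hSsqdef, hSe2def]
      rw [← sum_sum_affine (fun i j => trP (V i) (V j)) (fun i j => e2fun (V i) (V j))
        1 (-(((d:ℝ)-1)/2)) 0 (((d:ℝ)-1)*((d:ℝ)-2)/2)]
      refine Finset.sum_congr rfl fun i _ => Finset.sum_congr rfl fun j _ => ?_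
      simp only [P22d]
      ring
    have hd1 : (d:ℝ) - 1 ≠ 0 := by linarith
    have hcval : c = 4*(d:ℝ)/(((d:ℝ)+2)*((d:ℝ)-1)) := by
      have h1 : (N:ℝ) * ((N:ℝ)-1) * c = 4*(N:ℝ)^2/(d:ℝ) - 2*(N:ℝ) := by
        linarith [hS1c, hS1v']
      rw [hNr] at h1
      have e1 : ((d:ℝ)*((d:ℝ)+1)/2)*(((d:ℝ)*((d:ℝ)+1)/2)-1)
          = (d:ℝ)*((d:ℝ)+1)*((d:ℝ)-1)*((d:ℝ)+2)/4 := by ring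
      have e2 : 4*((d:ℝ)*((d:ℝ)+1)/2)^2/(d:ℝ) - 2*((d:ℝ)*((d:ℝ)+1)/2)
          = (d:ℝ)^2*((d:ℝ)+1) := by
        field_simp
        ring
      rw [e1, e2] at h1
      rw [eq_div_iff (by
        intro hcontra
        have h7 : ((d:ℝ)+2)*((d:ℝ)-1) ≠ 0 := mul_ne_zero hd2 hd1
        exact h7 hcontra)]
      have h4 : ((d:ℝ)*((d:ℝ)+1)/4) * (c*(((d:ℝ)+2)*((d:ℝ)-1)))
          = ((d:ℝ)*((d:ℝ)+1)/4) * (4*(d:ℝ)) := by linear_combination h1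
      refine mul_left_cancel₀ ?_ h4
      intro hcontra
      have h8 : (d:ℝ)*((d:ℝ)+1) ≠ 0 := mul_ne_zero hd0 (by linarith)
      apply h8
      linarith
    rw [hpush, hSe2v, hSsqc, hcval, hS1v', hAv, hNr]
    field_simp
    ring
end
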